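/- arXiv:2302.04993 — 2 statements merged into one kernel-verified Lean document; each statement's English description precedes it below -/
import Mathlib

section
/- For a complex symmetric matrix A, if λ > 0 and x ≠ 0 satisfy A x = λ x̄ (antilinear eigenvalue problem), then there exists an index i such that |λ − |a_{ii}|| ≤ Σ_{j≠i} |a_{ij}|. (Gershgorin-type theorem for the antilinear eigenvalue problem.) -/
open Matrix

/-- Gershgorin-type theorem for the antilinear eigenvalue problem `A x = λ x̄`
of a complex symmetric matrix. -/
theorem stmt_1 (n : ℕ) (A : Matrix (Fin n) (Fin n) ℂ) (hsym : Aᵀ = A)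
    (lam : ℝ) (hlam : 0 < lam) (x : Fin n → ℂ) (hx : x ≠ 0)
    (heig : A.mulVec x = (lam : ℂ) • star x) :
    ∃ i, |lam - ‖A i i‖| ≤ ∑ j ∈ Finset.univ.erase i, ‖A i j‖ := by
  have hne : (Finset.univ : Finset (Fin n)).Nonempty := by
    by_contra h
    rw [Finset.not_nonempty_iff_eq_empty, Finset.univ_eq_empty_iff] at h
    exact hx (funext fun j => (h.false j).elim)
  obtain ⟨i, -, hi⟩ := Finset.exists_max_image Finset.univ (fun j => ‖x j‖) hne
  have hxi : 0 < ‖x i‖ := by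
    by_contra h0
    push_neg at h0
    apply hx
    funext j
    have h1 : ‖x j‖ ≤ 0 := le_trans (hi j (Finset.mem_univ j)) h0
    have h2 : ‖x j‖ = 0 := le_antisymm h1 (norm_nonneg _)
    simpa using h2
  refine ⟨i, ?_⟩
  set a := ‖x i‖ with ha
  have hrow : (lam : ℂ) * (starRingEnd ℂ) (x i) - A i i * x i
      = ∑ j ∈ Finset.univ.erase i, A i j * x j := by
    have h1 : A.mulVec x i = (lam : ℂ) * (starRingEnd ℂ) (x i) := by
      rw [heig]; simp
    have h2 : A.mulVec x i = A i i * x i + ∑ j ∈ Finset.univ.erase i, A i j * x j := by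
      rw [Matrix.mulVec, dotProduct, ← Finset.add_sum_erase _ _ (Finset.mem_univ i)]
    rw [← h1, h2]; ring
  have key : |lam - ‖A i i‖| * a
      ≤ (∑ j ∈ Finset.univ.erase i, ‖A i j‖) * a := by
    have e1 : |lam - ‖A i i‖| * a
        = |‖(lam : ℂ) * (starRingEnd ℂ) (x i)‖ - ‖A i i * x i‖| := by
      rw [norm_mul, norm_mul, Complex.norm_conj, Complex.norm_real, Real.norm_eq_abs, abs_of_pos hlam]
      rw [abs_sub_comm, ← abs_of_pos hxi, ← abs_mul, abs_sub_comm]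
      ring_nf
      rfl
    rw [e1]
    calc |‖(lam : ℂ) * (starRingEnd ℂ) (x i)‖ - ‖A i i * x i‖|
        ≤ ‖(lam : ℂ) * (starRingEnd ℂ) (x i) - A i i * x i‖ :=
          abs_norm_sub_norm_le _ _
      _ = ‖∑ j ∈ Finset.univ.erase i, A i j * x j‖ := by rw [hrow]
      _ ≤ ∑ j ∈ Finset.univ.erase i, ‖A i j * x j‖ :=
          norm_sum_le _ _
      _ ≤ ∑ j ∈ Finset.univ.erase i, ‖A i j‖ * a := by
          refine Finset.sum_le_sum fun j _ => ?_
          rw [norm_mul]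
          exact mul_le_mul_of_nonneg_left (hi j (Finset.mem_univ j)) (norm_nonneg _)
      _ = (∑ j ∈ Finset.univ.erase i, ‖A i j‖) * a := by
          rw [Finset.sum_mul]
  exact le_of_mul_le_mul_right key hxi
end

section
/- Let A ∈ ℂ^{n×n} be complex symmetric (A = Aᵀ). Then ‖A‖₂ = sup{ λ ≥ 0 : ∃ x ≠ 0, A x = λ x̄ }, i.e., the largest singular value of A is attained as a 'coneigenvalue' of the antilinear map x ↦ A x̄. (Takagi factorization consequence.) -/
open Matrix
open scoped Matrix.Norms.L2Operator

@[reducible]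
noncomputable def matCStar (n : ℕ) : CStarAlgebra (Matrix (Fin n) (Fin n) ℂ) :=
  Matrix.instCStarAlgebra

attribute [local instance] matCStar

-- eigenvector from real spectrum membership
lemma eig_of_mem_spectrum {n : ℕ} (B : Matrix (Fin n) (Fin n) ℂ) {μ : ℝ}
    (hμ : μ ∈ spectrum ℝ B) :
    ∃ v : Fin n → ℂ, v ≠ 0 ∧ B.mulVec v = (μ : ℂ) • v := by
  classical
  rw [spectrum.mem_iff] at hμ
  have hdet : (algebraMap ℝ (Matrix (Fin n) (Fin n) ℂ) μ - B).det = 0 := by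
    by_contra h
    exact hμ ((Matrix.isUnit_iff_isUnit_det _).mpr (isUnit_iff_ne_zero.mpr h))
  obtain ⟨v, hv0, hv⟩ := (Matrix.exists_mulVec_eq_zero_iff).mpr hdet
  refine ⟨v, hv0, ?_⟩
  have h1 : algebraMap ℝ (Matrix (Fin n) (Fin n) ℂ) μ = (μ : ℂ) • (1 : Matrix (Fin n) (Fin n) ℂ) := by
    rw [Algebra.algebraMap_eq_smul_one, ← smul_one_smul ℂ μ (1 : Matrix (Fin n) (Fin n) ℂ)]
    norm_num
  rw [Matrix.sub_mulVec, h1, Matrix.smul_mulVec, Matrix.one_mulVec, sub_eq_zero] at hv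
  exact hv.symm

lemma upper_bound {n : ℕ} (A : Matrix (Fin n) (Fin n) ℂ) {lam : ℝ} (h0 : 0 ≤ lam)
    {x : Fin n → ℂ} (hx : x ≠ 0) (hAx : A.mulVec x = (lam : ℂ) • star x) :
    lam ≤ ‖A‖ := by
  set y : EuclideanSpace ℂ (Fin n) := (EuclideanSpace.equiv (Fin n) ℂ).symm x with hy
  have hkey := A.l2_opNorm_mulVec y
  have hyx : A.mulVec y = (lam : ℂ) • star x := hAx
  rw [hyx] at hkey
  have hnorm1 : ‖(EuclideanSpace.equiv (Fin n) ℂ).symm ((lam : ℂ) • star x)‖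
      = lam * ‖y‖ := by
    have : ((EuclideanSpace.equiv (Fin n) ℂ).symm ((lam : ℂ) • star x) : EuclideanSpace ℂ (Fin n))
        = (lam : ℂ) • ((EuclideanSpace.equiv (Fin n) ℂ).symm (star x)) := rfl
    rw [this, norm_smul]
    congr 1
    · rw [Complex.norm_real, Real.norm_eq_abs, abs_of_nonneg h0]
    · rw [EuclideanSpace.norm_eq, EuclideanSpace.norm_eq]
      congr 1
      apply Finset.sum_congr rfl
      intro i _
      simp [hy]
  rw [hnorm1] at hkey
  have hy0 : 0 < ‖y‖ := by
    rw [norm_pos_iff]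
    simpa [hy] using hx
  exact le_of_mul_le_mul_right hkey hy0

open scoped ComplexOrder in
lemma exists_coneig {n : ℕ} (hn : 0 < n) (A : Matrix (Fin n) (Fin n) ℂ) (hsym : Aᵀ = A) :
    ∃ x : Fin n → ℂ, x ≠ 0 ∧ A.mulVec x = (‖A‖ : ℂ) • star x := by
  classical
  haveI : Nonempty (Fin n) := ⟨⟨0, hn⟩⟩
  by_cases hA0 : ‖A‖ = 0
  · have hA : A = 0 := norm_eq_zero.mp hA0
    refine ⟨fun _ => 1, ?_, ?_⟩
    · intro h
      have := congrFun h ⟨0, hn⟩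
      simp at this
    · simp [hA, hA0]
  · set σ : ℝ := ‖A‖ with hσ
    have hσpos : 0 < σ := lt_of_le_of_ne (norm_nonneg A) (Ne.symm hA0)
    set B : Matrix (Fin n) (Fin n) ℂ := Aᴴ * A with hB
    have hBsa : _root_.IsSelfAdjoint B := by
      show star B = B
      rw [Matrix.star_eq_conjTranspose]
      exact Matrix.isHermitian_conjTranspose_mul_self A
    have hBnorm : ‖B‖ = σ ^ 2 := by
      rw [hB, Matrix.l2_opNorm_conjTranspose_mul_self, sq]
    have hspec := CStarAlgebra.norm_or_neg_norm_mem_spectrum hBsa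
    rw [hBnorm] at hspec
    have hPSD := Matrix.posSemidef_conjTranspose_mul_self A
    have hμ : (σ ^ 2 : ℝ) ∈ spectrum ℝ B := by
      rcases hspec with h | h
      · exact h
      · exfalso
        obtain ⟨v, hv0, hv⟩ := eig_of_mem_spectrum B h
        have hnonneg := hPSD.dotProduct_mulVec_nonneg v
        rw [← hB, hv] at hnonneg
        have ht' : dotProduct (star v) ((((-(σ ^ 2) : ℝ)) : ℂ) • v)
            = ((-(σ^2) : ℝ) : ℂ) * dotProduct (star v) v := by
          rw [dotProduct_smul]; rfl
        rw [ht'] at hnonneg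
        have htr : dotProduct (star v) v = ((∑ i, Complex.normSq (v i) : ℝ) : ℂ) := by
          push_cast
          simp [dotProduct, Complex.normSq_eq_conj_mul_self, mul_comm]
        have htpos : (0 : ℝ) < ∑ i, Complex.normSq (v i) := by
          rcases Function.ne_iff.mp hv0 with ⟨i, hi⟩
          exact Finset.sum_pos' (fun j _ => Complex.normSq_nonneg _)
            ⟨i, Finset.mem_univ i, Complex.normSq_pos.mpr hi⟩
        rw [htr, ← Complex.ofReal_mul, Complex.zero_le_real] at hnonneg
        nlinarith [pow_pos hσpos 2, mul_pos (pow_pos hσpos 2) htpos]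
    obtain ⟨v, hv0, hv⟩ := eig_of_mem_spectrum B hμ
    set w : Fin n → ℂ := A.mulVec v with hw
    have hAH : Aᴴ.mulVec w = ((σ^2 : ℝ) : ℂ) • v := by
      rw [hw, Matrix.mulVec_mulVec, ← hB, hv]
    have hconj : A.mulVec (star w) = ((σ^2 : ℝ) : ℂ) • star v := by
      calc A *ᵥ star w = Aᵀ *ᵥ star w := by rw [hsym]
        _ = star w ᵥ* A := Matrix.mulVec_transpose A (star w)
        _ = star w ᵥ* (Aᴴ)ᴴ := by rw [Matrix.conjTranspose_conjTranspose]
        _ = star (Aᴴ *ᵥ w) := (Matrix.star_mulVec Aᴴ w).symm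
        _ = ((σ^2:ℝ):ℂ) • star v := by
            rw [hAH, star_smul, Complex.star_def, Complex.conj_ofReal]
    have hsR : star ((σ : ℝ) : ℂ) = ((σ : ℝ) : ℂ) := by
      rw [Complex.star_def, Complex.conj_ofReal]
    by_cases hx0 : ((σ:ℝ) : ℂ) • v + star w = 0
    · have hsw : star w = -(((σ:ℝ):ℂ) • v) := by
        have h1 : ((σ:ℝ):ℂ) • v = -star w := by
          rwa [add_eq_zero_iff_eq_neg] at hx0
        rw [h1, neg_neg]
      have hwv : w = -(((σ:ℝ):ℂ) • star v) := by
        have := congrArg star hsw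
        rw [star_star, star_neg, star_smul, hsR] at this
        exact this
      have hsI : star Complex.I = -Complex.I := by
        rw [Complex.star_def, Complex.conj_I]
      refine ⟨Complex.I • v, smul_ne_zero Complex.I_ne_zero hv0, ?_⟩
      rw [Matrix.mulVec_smul, ← hw, hwv, star_smul, hsI]
      module
    · refine ⟨((σ:ℝ) : ℂ) • v + star w, hx0, ?_⟩
      rw [Matrix.mulVec_add, Matrix.mulVec_smul, ← hw, hconj, star_add, star_smul, star_star, hsR]
      push_cast
      module

/-- Takagi-factorization consequence: the spectral norm of a complex symmetric
matrix is the supremum of its antilinear (con)eigenvalues. -/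
theorem stmt_19 (n : ℕ) (A : Matrix (Fin n) (Fin n) ℂ) (hsym : Aᵀ = A) :
    ‖A‖ = sSup {lam : ℝ | 0 ≤ lam ∧
      ∃ x : Fin n → ℂ, x ≠ 0 ∧ A.mulVec x = (lam : ℂ) • star x} := by
  set S : Set ℝ := {lam : ℝ | 0 ≤ lam ∧
      ∃ x : Fin n → ℂ, x ≠ 0 ∧ A.mulVec x = (lam : ℂ) • star x} with hS
  rcases Nat.eq_zero_or_pos n with h0 | hn
  · subst h0
    have hSempty : S = ∅ := by
      ext lam
      simp only [hS, Set.mem_setOf_eq, Set.mem_empty_iff_false, iff_false, not_and]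
      rintro - ⟨x, hx, -⟩
      exact hx (Subsingleton.elim x 0)
    rw [hSempty, Real.sSup_empty]
    have : A = 0 := Subsingleton.elim A 0
    rw [this, norm_zero]
  · have hub : ∀ lam ∈ S, lam ≤ ‖A‖ := by
      rintro lam ⟨h0, x, hx, hAx⟩
      exact upper_bound A h0 hx hAx
    have hmem : ‖A‖ ∈ S := by
      obtain ⟨x, hx, hAx⟩ := exists_coneig hn A hsym
      exact ⟨norm_nonneg A, x, hx, hAx⟩
    exact (le_antisymm (le_csSup ⟨‖A‖, hub⟩ hmem) (csSup_le ⟨‖A‖, hmem⟩ hub))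
end
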